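/- Let G be a connected graph, u and v vertices in the same clique C of G − U (where U is a cluster vertex deletion set), such that N_U(u) ⊆ N_U(v). Then N[u] ⊆ N[v], and consequently c(G) = c(G \ {u}). -/

import Mathlib

open SimpleGraph

variable {V : Type*}

/-- A (positional) strategy for `k` cops on the graph `G`: an initial placement and a
move function; each cop may stay or move to an adjacent vertex. -/
structure CopStrat (G : SimpleGraph V) (k : ℕ) where
  init : Fin k → V
  move : (Fin k → V) → V → Fin k → V
  valid : ∀ c r i, move c r i = c i ∨ G.Adj (c i) (move c r i)

/-- A strategy for the robber: an initial placement (knowing the cops' placement) and a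
move function; the robber may stay or move to an adjacent vertex. -/
structure RobStrat (G : SimpleGraph V) (k : ℕ) where
  init : (Fin k → V) → V
  move : (Fin k → V) → V → V
  valid : ∀ c r, move c r = r ∨ G.Adj r (move c r)

/-- The play determined by initial placements and move functions: position of the cops and
of the robber after `n` full rounds (cops move first in each round). -/
def gplay {k : ℕ} (ci : Fin k → V) (cm : (Fin k → V) → V → Fin k → V)
    (ri : (Fin k → V) → V) (rm : (Fin k → V) → V → V) : ℕ → (Fin k → V) × V
  | 0 => (ci, ri ci)
  | n + 1 =>
    let p := gplay ci cm ri rm n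
    let c' := cm p.1 p.2
    (c', rm c' p.2)

/-- The robber is caught: at some moment (either on a cops' move, or because the
positions already coincide) a cop occupies the robber's vertex. -/
def gCaught {k : ℕ} (ci : Fin k → V) (cm : (Fin k → V) → V → Fin k → V)
    (ri : (Fin k → V) → V) (rm : (Fin k → V) → V → V) : Prop :=
  ∃ n, ∃ i,
    (gplay ci cm ri rm n).1 i = (gplay ci cm ri rm n).2 ∨
      cm (gplay ci cm ri rm n).1 (gplay ci cm ri rm n).2 i = (gplay ci cm ri rm n).2

/-- `k` cops have a winning strategy on `G`. -/
def CopsWin (G : SimpleGraph V) (k : ℕ) : Prop :=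
  ∃ CS : CopStrat G k, ∀ RS : RobStrat G k,
    gCaught CS.init CS.move RS.init RS.move

/-- The cop number of `G`. -/
noncomputable def copNumber (G : SimpleGraph V) : ℕ := sInf {k | CopsWin G k}


/-- A graph is a disjoint union of cliques. -/
def IsClusterGraph {W : Type*} (H : SimpleGraph W) : Prop :=
  ∀ ⦃x y z : W⦄, H.Adj x y → H.Adj y z → x = z ∨ H.Adj x z



section CWTheory

variable {W : Type*} (H : SimpleGraph W) (k : ℕ)

/-- A valid simultaneous move of the cops. -/
def CMoveValid (c d : Fin k → W) : Prop :=
  ∀ i, d i = c i ∨ H.Adj (c i) (d i)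

/-- A valid move of the robber. -/
def RMoveValid (r r' : W) : Prop := r' = r ∨ H.Adj r r'

/-- From position `(c, r)` (cops to move) the cops can force a capture. -/
inductive CW : (Fin k → W) → W → Prop where
  | capture : ∀ c r d, CMoveValid H k c d → (∃ i, d i = r) → CW c r
  | step : ∀ c r d, CMoveValid H k c d →
      (∀ r', RMoveValid H r r' → CW d r') → CW c r

/-- Capture forced within `n` cop moves. -/
def CWn : ℕ → (Fin k → W) → W → Prop
  | 0, _, _ => False
  | n + 1, c, r => ∃ d, CMoveValid H k c d ∧
      ((∃ i, d i = r) ∨ ∀ r', RMoveValid H r r' → CWn n d r')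

lemma cwn_succ : ∀ n c r, CWn H k n c r → CWn H k (n + 1) c r := by
  intro n
  induction n with
  | zero => intro c r h; exact h.elim
  | succ n ih =>
    rintro c r ⟨d, hd, h⟩
    exact ⟨d, hd, h.imp id fun ha r' hr' => ih d r' (ha r' hr')⟩

lemma cwn_mono {n m : ℕ} (h : n ≤ m) {c r} (hc : CWn H k n c r) : CWn H k m c r := by
  induction m, h using Nat.le_induction with
  | base => exact hc
  | succ m _ ih => exact cwn_succ H k m _ _ ih

lemma cw_iff_cwn [Fintype W] (c : Fin k → W) (r : W) :
    CW H k c r ↔ ∃ n, CWn H k n c r := by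
  constructor
  · intro h
    induction h with
    | capture c r d hd hc => exact ⟨1, d, hd, Or.inl hc⟩
    | step c r d hd h ih =>
      classical
      refine ⟨(Finset.univ.sup fun r' => sInf {n | CWn H k n d r'}) + 1, d, hd, Or.inr ?_⟩
      intro r' hr'
      have hne : {n | CWn H k n d r'}.Nonempty := ih r' hr'
      exact cwn_mono H k (Finset.le_sup (Finset.mem_univ r')) (Nat.sInf_mem hne)
  · rintro ⟨n, hn⟩
    induction n generalizing c r with
    | zero => exact hn.elim
    | succ n ih =>
      obtain ⟨d, hd, h | h⟩ := hn
      · exact CW.capture c r d hd h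
      · exact CW.step c r d hd fun r' hr' => ih d r' (h r' hr')

/-- The rank of a position: least number of cop moves needed to force capture. -/
noncomputable def cwRank (c : Fin k → W) (r : W) : ℕ := sInf {n | CWn H k n c r}

open Classical in
/-- A rank-decreasing cop move. -/
noncomputable def goodMove (c : Fin k → W) (r : W) : Fin k → W :=
  if h : ∃ d, CMoveValid H k c d ∧
      ((∃ i, d i = r) ∨ ∀ r', RMoveValid H r r' → CWn H k (cwRank H k c r - 1) d r')
  then h.choose else c

lemma goodMove_pos {c : Fin k → W} {r : W}
    (h : ∃ d, CMoveValid H k c d ∧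
      ((∃ i, d i = r) ∨ ∀ r', RMoveValid H r r' → CWn H k (cwRank H k c r - 1) d r')) :
    goodMove H k c r = h.choose := by
  unfold goodMove; exact dif_pos h

lemma copsWin_of_cw [Fintype W] (c₀ : Fin k → W) (h : ∀ r, CW H k c₀ r) :
    CopsWin H k := by
  classical
  refine ⟨⟨c₀, fun c r => goodMove H k c r, ?_⟩, ?_⟩
  · intro c r i
    unfold goodMove
    split
    · next hex => exact hex.choose_spec.1 i
    · exact Or.inl rfl
  · intro RS
    show gCaught c₀ (fun c r => goodMove H k c r) RS.init RS.move
    set cm : (Fin k → W) → W → Fin k → W := fun c r => goodMove H k c r with hcm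
    set p : ℕ → (Fin k → W) × W := gplay c₀ cm RS.init RS.move with hp
    have hpstep : ∀ n, p (n + 1) = (cm (p n).1 (p n).2, RS.move (cm (p n).1 (p n).2) (p n).2) := by
      intro n; rfl
    have key : ∀ m n, CWn H k m (p n).1 (p n).2 → gCaught c₀ cm RS.init RS.move := by
      intro m
      induction m using Nat.strong_induction_on with
      | _ m ihm =>
        intro n hmn
        have hne : {j | CWn H k j (p n).1 (p n).2}.Nonempty := ⟨m, hmn⟩
        have hmem : CWn H k (cwRank H k (p n).1 (p n).2) (p n).1 (p n).2 := Nat.sInf_mem hne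
        have hle : cwRank H k (p n).1 (p n).2 ≤ m := Nat.sInf_le hmn
        have hpos : cwRank H k (p n).1 (p n).2 ≠ 0 := by
          intro h0; rw [h0] at hmem; exact hmem
        obtain ⟨ρ', hρ'⟩ := Nat.exists_eq_succ_of_ne_zero hpos
        rw [hρ'] at hmem
        have hcond : ∃ d, CMoveValid H k (p n).1 d ∧
            ((∃ i, d i = (p n).2) ∨ ∀ r', RMoveValid H (p n).2 r' →
              CWn H k (cwRank H k (p n).1 (p n).2 - 1) d r') := by
          rw [hρ']; simpa [CWn] using hmem
        have hgm : cm (p n).1 (p n).2 = hcond.choose := goodMove_pos H k hcond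
        obtain ⟨hval, hcap | hall⟩ := hcond.choose_spec
        · obtain ⟨i, hi⟩ := hcap
          exact ⟨n, i, Or.inr (by rw [hgm]; exact hi)⟩
        · refine ihm (cwRank H k (p n).1 (p n).2 - 1) (by omega) (n + 1) ?_
          rw [hpstep n, hgm]
          exact hall (RS.move hcond.choose (p n).2) (RS.valid hcond.choose (p n).2)
    obtain ⟨m, hm⟩ := (cw_iff_cwn H k c₀ (RS.init c₀)).mp (h (RS.init c₀))
    exact key m 0 hm

lemma cw_of_copsWin (h : CopsWin H k) : ∃ c₀, ∀ r, CW H k c₀ r := by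
  classical
  by_contra hno
  push_neg at hno
  obtain ⟨CS, hCS⟩ := h
  set rmov : (Fin k → W) → W → W := fun c r =>
    if hex : ∃ r2, RMoveValid H r r2 ∧ ¬ CW H k c r2 then hex.choose else r with hrmov
  set rinit : (Fin k → W) → W := fun c => (hno c).choose with hrinit
  have hRSvalid : ∀ c r, rmov c r = r ∨ H.Adj r (rmov c r) := by
    intro c r
    rw [hrmov]
    dsimp only
    split
    · next hex => exact hex.choose_spec.1
    · exact Or.inl rfl
  set RS : RobStrat H k := ⟨rinit, rmov, hRSvalid⟩ with hRS
  set p : ℕ → (Fin k → W) × W := gplay CS.init CS.move rinit rmov with hp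
  have hpstep : ∀ n, p (n + 1) = (CS.move (p n).1 (p n).2,
      rmov (CS.move (p n).1 (p n).2) (p n).2) := fun n => rfl
  have hinv : ∀ n, ¬ CW H k (p n).1 (p n).2 := by
    intro n
    induction n with
    | zero => exact (hno CS.init).choose_spec
    | succ n ih =>
      have hd : CMoveValid H k (p n).1 (CS.move (p n).1 (p n).2) := CS.valid _ _
      have hex : ∃ r2, RMoveValid H (p n).2 r2 ∧ ¬ CW H k (CS.move (p n).1 (p n).2) r2 := by
        by_contra hne
        push_neg at hne
        exact ih (CW.step _ _ _ hd fun r2 h2 => hne r2 h2)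
      rw [hpstep n]
      have : rmov (CS.move (p n).1 (p n).2) (p n).2 = hex.choose := by
        rw [hrmov]; exact dif_pos hex
      rw [this]
      exact hex.choose_spec.2
  have := hCS RS
  obtain ⟨n, i, hcase⟩ := this
  rcases hcase with hc | hc
  · exact hinv n (CW.capture _ _ (p n).1 (fun j => Or.inl rfl) ⟨i, hc⟩)
  · exact hinv n (CW.capture _ _ (CS.move (p n).1 (p n).2) (CS.valid _ _) ⟨i, hc⟩)

lemma copsWin_iff_cw [Fintype W] : CopsWin H k ↔ ∃ c₀, ∀ r, CW H k c₀ r :=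
  ⟨cw_of_copsWin H k, fun ⟨c₀, h⟩ => copsWin_of_cw H k c₀ h⟩

end CWTheory

section Transfer

variable {V : Type*} {G : SimpleGraph V} {u v : V}

open Classical in
/-- The retraction sending `u` to `v` and fixing everything else. -/
noncomputable def psiMap (huv : u ≠ v) : V → ↥({u}ᶜ : Set V) := fun w =>
  if h : w = u then ⟨v, Set.mem_compl_singleton_iff.mpr (Ne.symm huv)⟩
  else ⟨w, Set.mem_compl_singleton_iff.mpr h⟩

lemma psiMap_val_of_ne (huv : u ≠ v) {w : V} (h : w ≠ u) : (psiMap huv w : V) = w := by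
  unfold psiMap; rw [dif_neg h]

lemma psiMap_u (huv : u ≠ v) : (psiMap huv u : V) = v := by
  unfold psiMap; rw [dif_pos rfl]

lemma psiMap_coe (huv : u ≠ v) (x : ↥({u}ᶜ : Set V)) : psiMap huv (x : V) = x :=
  Subtype.ext (psiMap_val_of_ne huv (Set.mem_compl_singleton_iff.mp x.2))

lemma induce_adj_iff {s : Set V} {x y : s} : (G.induce s).Adj x y ↔ G.Adj (x : V) (y : V) :=
  comap_adj

/-- The retraction is a graph homomorphism (up to collapsing edges). -/
lemma psi_move (huv : u ≠ v) (hadj : G.Adj u v)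
    (hdom : ∀ w, G.Adj u w → w = v ∨ G.Adj v w) {a b : V}
    (hab : b = a ∨ G.Adj a b) :
    psiMap huv b = psiMap huv a ∨
      (G.induce ({u}ᶜ : Set V)).Adj (psiMap huv a) (psiMap huv b) := by
  rcases hab with rfl | hab
  · exact Or.inl rfl
  by_cases ha : a = u
  · have hub : G.Adj u b := by rw [← ha]; exact hab
    have hb : b ≠ u := fun hb' => G.irrefl (hb' ▸ hub)
    rcases hdom b hub with hbv | h
    · refine Or.inl (Subtype.ext ?_)
      rw [psiMap_val_of_ne huv hb, ha, psiMap_u]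
      exact hbv
    · refine Or.inr (induce_adj_iff.mpr ?_)
      rw [ha, psiMap_u, psiMap_val_of_ne huv hb]
      exact h
  · by_cases hbu : b = u
    · have hua : G.Adj u a := by rw [← hbu]; exact hab.symm
      rcases hdom a hua with hav | h
      · refine Or.inl (Subtype.ext ?_)
        rw [hbu, psiMap_u, psiMap_val_of_ne huv ha]
        exact hav.symm
      · refine Or.inr (induce_adj_iff.mpr ?_)
        rw [psiMap_val_of_ne huv ha, hbu, psiMap_u]
        exact h.symm
    · refine Or.inr (induce_adj_iff.mpr ?_)
      rw [psiMap_val_of_ne huv ha, psiMap_val_of_ne huv hbu]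
      exact hab

/-- Transfer of cop-win positions from the reduced graph to `G`. -/
lemma cw_lift (huv : u ≠ v) (hadj : G.Adj u v)
    (hdom : ∀ w, G.Adj u w → w = v ∨ G.Adj v w) {k : ℕ}
    {c' : Fin k → ↥({u}ᶜ : Set V)} {r' : ↥({u}ᶜ : Set V)}
    (h : CW (G.induce ({u}ᶜ : Set V)) k c' r') :
    ∀ r : V, psiMap huv r = r' → CW G k (fun i => (c' i : V)) r := by
  classical
  induction h with
  | capture c' r' d' hd hcap =>
    intro r hr
    have hdval : CMoveValid G k (fun i => (c' i : V)) (fun i => (d' i : V)) := by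
      intro i
      rcases hd i with h | h
      · exact Or.inl (congrArg Subtype.val h)
      · exact Or.inr (induce_adj_iff.mp h)
    obtain ⟨i, hi⟩ := hcap
    by_cases hru : r = u
    · subst hru
      have hrv : (r' : V) = v := by rw [← hr, psiMap_u]
      refine CW.step _ _ (fun j => (d' j : V)) hdval ?_
      intro r2 hr2
      have hvr2 : r2 = v ∨ G.Adj v r2 := by
        rcases hr2 with rfl | h2
        · exact Or.inr hadj.symm
        · exact hdom r2 h2
      refine CW.capture _ _ (Function.update (fun j => (d' j : V)) i r2) ?_
        ⟨i, by simp⟩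
      intro j
      rcases eq_or_ne j i with rfl | hj
      · have hdj : (d' j : V) = v := by rw [hi, hrv]
        simp only [Function.update_self, hdj]
        rcases hvr2 with h2 | h2
        · exact Or.inl h2
        · exact Or.inr h2
      · rw [Function.update_of_ne hj]
        exact Or.inl rfl
    · have hrr : r = (r' : V) := by rw [← hr, psiMap_val_of_ne huv hru]
      refine CW.capture _ _ (fun j => (d' j : V)) hdval ⟨i, ?_⟩
      show (d' i : V) = r
      rw [hi]
      exact hrr.symm
  | step c' r' d' hd hall ih =>
    intro r hr
    have hdval : CMoveValid G k (fun i => (c' i : V)) (fun i => (d' i : V)) := by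
      intro i
      rcases hd i with h | h
      · exact Or.inl (congrArg Subtype.val h)
      · exact Or.inr (induce_adj_iff.mp h)
    refine CW.step _ _ (fun j => (d' j : V)) hdval ?_
    intro r2 hr2
    refine ih (psiMap huv r2) ?_ r2 rfl
    show psiMap huv r2 = r' ∨ (G.induce ({u}ᶜ : Set V)).Adj r' (psiMap huv r2)
    rw [← hr]
    exact psi_move huv hadj hdom hr2

/-- Transfer of cop-win positions from `G` to the reduced graph. -/
lemma cw_push (huv : u ≠ v) (hadj : G.Adj u v)
    (hdom : ∀ w, G.Adj u w → w = v ∨ G.Adj v w) {k : ℕ}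
    {c : Fin k → V} {r : V} (h : CW G k c r) :
    ∀ r' : ↥({u}ᶜ : Set V), (r' : V) = r →
      CW (G.induce ({u}ᶜ : Set V)) k (fun i => psiMap huv (c i)) r' := by
  induction h with
  | capture c r d hd hcap =>
    intro r' hr'
    refine CW.capture _ _ (fun i => psiMap huv (d i))
      (fun i => psi_move huv hadj hdom (hd i)) ?_
    obtain ⟨i, hi⟩ := hcap
    refine ⟨i, ?_⟩
    show psiMap huv (d i) = r'
    rw [hi, ← hr', psiMap_coe]
  | step c r d hd hall ih =>
    intro r' hr'
    refine CW.step _ _ (fun i => psiMap huv (d i))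
      (fun i => psi_move huv hadj hdom (hd i)) ?_
    intro s' hs'
    refine ih (s' : V) ?_ s' rfl
    rcases hs' with rfl | h2
    · exact Or.inl hr'
    · refine Or.inr ?_
      rw [← hr']
      exact induce_adj_iff.mp h2

end Transfer

lemma IsClusterGraph.eq_or_adj {W : Type*} {H : SimpleGraph W}
    (h : IsClusterGraph H) {x y : W} (hr : H.Reachable x y) :
    x = y ∨ H.Adj x y := by
  obtain ⟨p⟩ := hr
  induction p with
  | nil => exact Or.inl rfl
  | cons ha _ ih =>
    rcases ih with rfl | hadj
    · exact Or.inr ha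
    · exact h ha hadj

/-- If `u` and `v` are distinct vertices of the same clique of `G − U` (where `U` is a
cluster vertex deletion set) with `N_U(u) ⊆ N_U(v)`, then `N[u] ⊆ N[v]` and
`c(G) = c(G \ {u})`. -/
theorem copNumber_delete_clique_dominated
    {V : Type*} [Fintype V] (G : SimpleGraph V) (hG : G.Connected)
    (U : Set V) (hU : IsClusterGraph (G.induce Uᶜ))
    (u v : V) (hu : u ∉ U) (hv : v ∉ U) (huv : u ≠ v)
    (hsame : (G.induce Uᶜ).Reachable ⟨u, hu⟩ ⟨v, hv⟩)
    (hNU : G.neighborSet u ∩ U ⊆ G.neighborSet v ∩ U) :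
    insert u (G.neighborSet u) ⊆ insert v (G.neighborSet v) ∧
      copNumber G = copNumber (G.induce ({u}ᶜ : Set V)) := by
  classical
  have hadj : G.Adj u v := by
    rcases hU.eq_or_adj hsame with h | h
    · exact absurd (congrArg Subtype.val h) huv
    · exact induce_adj_iff.mp h
  have hdom : ∀ w, G.Adj u w → w = v ∨ G.Adj v w := by
    intro w hw
    by_cases hwU : w ∈ U
    · exact Or.inr (hNU ⟨hw, hwU⟩).1
    · by_cases hwv : w = v
      · exact Or.inl hwv
      · have h1 : (G.induce Uᶜ).Adj ⟨v, hv⟩ ⟨u, hu⟩ := induce_adj_iff.mpr hadj.symm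
        have h2 : (G.induce Uᶜ).Adj ⟨u, hu⟩ ⟨w, hwU⟩ := induce_adj_iff.mpr hw
        rcases hU h1 h2 with h | h
        · exact Or.inl (congrArg Subtype.val h).symm
        · exact Or.inr (induce_adj_iff.mp h)
  constructor
  · intro x hx
    rcases Set.mem_insert_iff.mp hx with rfl | hx
    · exact Set.mem_insert_iff.mpr (Or.inr hadj.symm)
    · rcases hdom x hx with rfl | h
      · exact Set.mem_insert _ _
      · exact Set.mem_insert_iff.mpr (Or.inr h)
  · haveI : Fintype ↥({u}ᶜ : Set V) := Fintype.ofFinite _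
    have hiff : ∀ k, CopsWin G k ↔ CopsWin (G.induce ({u}ᶜ : Set V)) k := by
      intro k
      constructor
      · intro h
        obtain ⟨c₀, hc₀⟩ := cw_of_copsWin G k h
        exact copsWin_of_cw _ k (fun i => psiMap huv (c₀ i))
          (fun r' => cw_push huv hadj hdom (hc₀ (r' : V)) r' rfl)
      · intro h
        obtain ⟨c₀, hc₀⟩ := cw_of_copsWin _ k h
        exact copsWin_of_cw G k (fun i => ((c₀ i : V)))
          (fun r => cw_lift huv hadj hdom (hc₀ (psiMap huv r)) r rfl)
    unfold copNumber
    congr 1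
    ext k
    simp only [Set.mem_setOf_eq]
    exact hiff k
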